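/- Let T > 0 and n ≥ 1, and let [0,T]^n_{0̂} = {(t_1,…,t_n) ∈ [0,T]^n : t_i ≠ t_j for all i ≠ j}. The trace σ-algebra {C ∩ [0,T]^n_{0̂} : C ∈ ℬ([0,T]^n)} coincides with the σ-algebra of subsets of [0,T]^n_{0̂} generated by the rectangles A_1 × ⋯ × A_n with A_1,…,A_n ∈ ℬ([0,T]) pairwise disjoint. -/

import Mathlib

open MeasurableSpace MeasureTheory Set

section Aux

variable {T : ℝ}

/-- The `k`-th dyadic cell at level `m` inside `[0,T]`. -/
def dyadicCell (T : ℝ) (m k : ℕ) : Set (Set.Icc (0 : ℝ) T) :=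
  (Subtype.val : Set.Icc (0 : ℝ) T → ℝ) ⁻¹'
    Set.Ico ((k : ℝ) * T / 2 ^ m) (((k : ℝ) + 1) * T / 2 ^ m)

lemma dyadicCell_measurable (T : ℝ) (m k : ℕ) : MeasurableSet (dyadicCell T m k) :=
  measurableSet_Ico.preimage measurable_subtype_coe

lemma dyadicCell_disjoint (hT : 0 < T) (m : ℕ) {k k' : ℕ} (h : k ≠ k') :
    Disjoint (dyadicCell T m k) (dyadicCell T m k') := by
  wlog hk : k < k' generalizing k k'
  · exact (this h.symm (by omega)).symm
  rw [Set.disjoint_left]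
  rintro t ⟨h1, h2⟩ ⟨h3, h4⟩
  have hcast : ((k : ℝ) + 1) ≤ (k' : ℝ) := by exact_mod_cast hk
  have hpos : (0 : ℝ) < 2 ^ m := by positivity
  have : ((k : ℝ) + 1) * T / 2 ^ m ≤ (k' : ℝ) * T / 2 ^ m := by gcongr
  linarith

lemma mem_dyadicCell_floor (hT : 0 < T) (m : ℕ) (t : Set.Icc (0 : ℝ) T) :
    t ∈ dyadicCell T m ⌊(t : ℝ) * 2 ^ m / T⌋₊ := by
  have hpos : (0 : ℝ) < 2 ^ m := by positivity
  have ht0 : (0 : ℝ) ≤ t := t.2.1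
  set a : ℝ := (t : ℝ) * 2 ^ m / T with ha
  have ha0 : 0 ≤ a := by positivity
  have h1 : (⌊a⌋₊ : ℝ) ≤ a := Nat.floor_le ha0
  have h2 : a < (⌊a⌋₊ : ℝ) + 1 := Nat.lt_floor_add_one a
  have key : a * T / 2 ^ m = (t : ℝ) := by
    field_simp [ha]
    rw [ha, div_mul_cancel₀ _ hT.ne', mul_comm]
  constructor
  · have : (⌊a⌋₊ : ℝ) * T / 2 ^ m ≤ a * T / 2 ^ m := by gcongr
    simpa [key] using this
  · have : a * T / 2 ^ m < ((⌊a⌋₊ : ℝ) + 1) * T / 2 ^ m := by gcongr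
    simpa [key] using this

lemma dyadicCell_diam (m k : ℕ) {t t' : Set.Icc (0 : ℝ) T}
    (h : t ∈ dyadicCell T m k) (h' : t' ∈ dyadicCell T m k) :
    |(t : ℝ) - (t' : ℝ)| < T / 2 ^ m := by
  obtain ⟨h1, h2⟩ := h
  obtain ⟨h3, h4⟩ := h'
  have hsum : ((k : ℝ) + 1) * T / 2 ^ m = (k : ℝ) * T / 2 ^ m + T / 2 ^ m := by ring
  rw [abs_sub_lt_iff]
  constructor <;> linarith

end Aux

/-- **The trace σ-algebra on the off-diagonal set is generated by pairwise disjoint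
rectangles.** Let `T > 0`, `n ≥ 1`, and let
`[0,T]^n_{0̂} = {(t_1,…,t_n) ∈ [0,T]^n : t_i ≠ t_j for i ≠ j}` (the subtype of
injective tuples). The trace σ-algebra `{C ∩ [0,T]^n_{0̂} : C Borel}` (the canonical
σ-algebra of the subtype) coincides with the σ-algebra generated by the traces of the
rectangles `A_1 × ⋯ × A_n` with `A_1,…,A_n` Borel and pairwise disjoint. -/
theorem trace_sigmaAlgebra_offDiag_generated_by_disjoint_rectangles
    (T : ℝ) (hT : 0 < T) (n : ℕ) (hn : 1 ≤ n) :
    MeasurableSpace.generateFrom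
        {s : Set {x : Fin n → Set.Icc (0 : ℝ) T // Function.Injective x} |
          ∃ A : Fin n → Set (Set.Icc (0 : ℝ) T),
            (∀ i, MeasurableSet (A i)) ∧
            Pairwise (Function.onFun Disjoint A) ∧
            s = Subtype.val ⁻¹' Set.univ.pi A}
      = (inferInstance :
          MeasurableSpace {x : Fin n → Set.Icc (0 : ℝ) T // Function.Injective x}) := by
  set S : Set (Set {x : Fin n → Set.Icc (0 : ℝ) T // Function.Injective x}) :=
    {s | ∃ A : Fin n → Set (Set.Icc (0 : ℝ) T),
          (∀ i, MeasurableSet (A i)) ∧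
          Pairwise (Function.onFun Disjoint A) ∧
          s = Subtype.val ⁻¹' Set.univ.pi A} with hS
  apply le_antisymm
  · apply MeasurableSpace.generateFrom_le
    rintro s ⟨A, hA, -, rfl⟩
    exact (MeasurableSet.univ_pi fun i => hA i).preimage measurable_subtype_coe
  · -- the hard direction
    have key : ∀ (i : Fin n) (B : Set (Set.Icc (0 : ℝ) T)), MeasurableSet B →
        MeasurableSet[MeasurableSpace.generateFrom S]
          ((fun y : {x : Fin n → Set.Icc (0 : ℝ) T // Function.Injective x} => y.1 i) ⁻¹' B) := by
      intro i B hB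
      have hunion :
          ((fun y : {x : Fin n → Set.Icc (0 : ℝ) T // Function.Injective x} => y.1 i) ⁻¹' B)
            = ⋃ (m : ℕ) (f : Fin n → ℕ) (_ : Function.Injective f),
                Subtype.val ⁻¹' Set.univ.pi
                  (fun j => dyadicCell T m (f j) ∩ (if j = i then B else Set.univ)) := by
        ext y
        simp only [Set.mem_preimage, Set.mem_iUnion, Set.mem_univ_pi]
        constructor
        · intro hyB
          -- choose a fine enough level m
          set s : Finset ℝ := insert T
            ((Finset.univ.filter (fun p : Fin n × Fin n => p.1 ≠ p.2)).image
              (fun p => |(y.1 p.1 : ℝ) - (y.1 p.2 : ℝ)|)) with hs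
          have hsne : s.Nonempty := ⟨T, Finset.mem_insert_self _ _⟩
          set ε : ℝ := s.min' hsne with hε
          have hεpos : 0 < ε := by
            have hmem := s.min'_mem hsne
            rw [← hε] at hmem
            rcases Finset.mem_insert.mp hmem with h | h
            · rw [h]; exact hT
            · obtain ⟨p, hp, hpe⟩ := Finset.mem_image.mp h
              have hpne : p.1 ≠ p.2 := (Finset.mem_filter.mp hp).2
              rw [← hpe]
              rw [abs_pos, sub_ne_zero]
              intro hcontra
              exact hpne (y.2 (Subtype.ext hcontra))
          have hεle : ∀ j j' : Fin n, j ≠ j' → ε ≤ |(y.1 j : ℝ) - (y.1 j' : ℝ)| := by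
            intro j j' hjj
            apply Finset.min'_le
            refine Finset.mem_insert_of_mem (Finset.mem_image.mpr ⟨(j, j'), ?_, rfl⟩)
            exact Finset.mem_filter.mpr ⟨Finset.mem_univ _, hjj⟩
          obtain ⟨m, hm⟩ := pow_unbounded_of_one_lt (T / ε) (one_lt_two : (1 : ℝ) < 2)
          have hfine : T / 2 ^ m < ε := by
            rw [div_lt_iff₀ (by positivity)]
            rw [div_lt_iff₀ hεpos] at hm
            linarith
          refine ⟨m, fun j => ⌊(y.1 j : ℝ) * 2 ^ m / T⌋₊, ?_, ?_⟩
          · intro j j' hfj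
            by_contra hne
            have hfj' : ⌊(y.1 j : ℝ) * 2 ^ m / T⌋₊ = ⌊(y.1 j' : ℝ) * 2 ^ m / T⌋₊ := hfj
            have h1 := mem_dyadicCell_floor hT m (y.1 j)
            have h2 := mem_dyadicCell_floor hT m (y.1 j')
            rw [← hfj'] at h2
            have := dyadicCell_diam m _ h1 h2
            exact absurd (hεle j j' hne) (not_le.mpr (lt_of_lt_of_le this hfine.le))
          · intro j
            refine ⟨mem_dyadicCell_floor hT m (y.1 j), ?_⟩
            by_cases hji : j = i
            · subst hji; simp [hyB]
            · simp [hji]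
        · rintro ⟨m, f, -, hmem⟩
          have := (hmem i).2
          simpa using this
      rw [hunion]
      refine MeasurableSet.iUnion fun m => MeasurableSet.iUnion fun f =>
        MeasurableSet.iUnion fun hf => ?_
      apply measurableSet_generateFrom
      refine ⟨fun j => dyadicCell T m (f j) ∩ (if j = i then B else Set.univ), ?_, ?_, rfl⟩
      · intro j
        refine (dyadicCell_measurable T m (f j)).inter ?_
        split
        · exact hB
        · exact MeasurableSet.univ
      · intro j j' hjj
        exact Disjoint.mono Set.inter_subset_left Set.inter_subset_left
          (dyadicCell_disjoint hT m (fun h => hjj (hf h)))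
    refine MeasurableSpace.comap_le_iff_le_map.mpr
      (iSup_le fun i => MeasurableSpace.comap_le_iff_le_map.mpr ?_)
    exact fun B hB => key i B hB
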